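/- Let A be an associative algebra over a field and e(u) = Σ_{r≥1} e^{(r)} u^{-r} a series with coefficients in A satisfying (u-v)[e(u), e(v)] = c (e(v) - e(u))^2 for a scalar c. Then for every m ≥ 0, (u-v)[e(u), (e(v)-e(u))^m] = c·m·(e(v)-e(u))^{m+1} in A[[u^{-1}, v^{-1}]]. -/

import Mathlib

/-!
STATEMENT 8: Let `A` be an associative algebra over a field `k` and
`e(u) = Σ_{r≥1} e^{(r)} u^{-r}` a series satisfying
`(u - v)[e(u), e(v)] = c (e(v) - e(u))^2` for a scalar `c ∈ k`.  Then for every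
`m ≥ 0`, `(u - v)[e(u), (e(v) - e(u))^m] = c·m·(e(v) - e(u))^{m+1}`.

Laurent convention: `(u - v) * S = T` is encoded as
`(v⁻¹ - u⁻¹) * S = u⁻¹ * v⁻¹ * T` in `MvPowerSeries (Fin 2) A`
(variable `0` is `u⁻¹`, variable `1` is `v⁻¹`).
-/

noncomputable section

/-- The series `Σ_{r} f^{(r)} u^{-r}` viewed in `A[[u⁻¹, v⁻¹]]`, where the first
power-series variable (index `0`) plays the role of `u⁻¹` and the second
(index `1`) the role of `v⁻¹`. -/
def Useries {A : Type*} [Ring A] (f : ℕ → A) : MvPowerSeries (Fin 2) A :=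
  fun d => if d 1 = 0 then f (d 0) else 0

/-- The series `Σ_{r} f^{(r)} v^{-r}` viewed in `A[[u⁻¹, v⁻¹]]`. -/
def Vseries {A : Type*} [Ring A] (f : ℕ → A) : MvPowerSeries (Fin 2) A :=
  fun d => if d 0 = 0 then f (d 1) else 0

/-- `u⁻¹` as an element of `A[[u⁻¹, v⁻¹]]`. -/
def Xu {A : Type*} [Ring A] : MvPowerSeries (Fin 2) A := MvPowerSeries.X 0

/-- `v⁻¹` as an element of `A[[u⁻¹, v⁻¹]]`. -/
def Xv {A : Type*} [Ring A] : MvPowerSeries (Fin 2) A := MvPowerSeries.X 1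

theorem stmt8 {k A : Type*} [Field k] [Ring A] [Algebra k A]
    (c : k) (e : ℕ → A) (he0 : e 0 = 0)
    (hee : (Xv - Xu) * ⁅Useries e, Vseries e⁆ =
      c • (Xu * Xv * (Vseries e - Useries e) ^ 2))
    (m : ℕ) :
    (Xv - Xu) * ⁅Useries e, (Vseries e - Useries e) ^ m⁆ =
      (c * (m : k)) • (Xu * Xv * (Vseries e - Useries e) ^ (m + 1)) := by
  set U := Useries e with hU
  set V := Vseries e with hV
  set E := V - U with hE
  have hXu : ∀ f : MvPowerSeries (Fin 2) A, Commute Xu f :=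
    fun f => (MvPowerSeries.commute_X f 0).symm
  have hXv : ∀ f : MvPowerSeries (Fin 2) A, Commute Xv f :=
    fun f => (MvPowerSeries.commute_X f 1).symm
  have hX : ∀ f : MvPowerSeries (Fin 2) A, Commute (Xv - Xu) f :=
    fun f => (hXv f).sub_left (hXu f)
  have hUE : (Xv - Xu) * ⁅U, E⁆ = c • (Xu * Xv * E ^ 2) := by
    have : ⁅U, E⁆ = ⁅U, V⁆ := by rw [hE]; simp only [Ring.lie_def]; noncomm_ring
    rw [this]; exact hee
  induction m with
  | zero => simp [Ring.lie_def]
  | succ n ih =>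
    have hsplit : ⁅U, E ^ (n + 1)⁆ = ⁅U, E⁆ * E ^ n + E * ⁅U, E ^ n⁆ := by
      simp only [Ring.lie_def, pow_succ']
      noncomm_ring
    calc (Xv - Xu) * ⁅U, E ^ (n + 1)⁆
        = ((Xv - Xu) * ⁅U, E⁆) * E ^ n + E * ((Xv - Xu) * ⁅U, E ^ n⁆) := by
          rw [hsplit, mul_add, mul_assoc, ← mul_assoc (Xv - Xu) E, (hX E).eq,
            mul_assoc]
      _ = (c • (Xu * Xv * E ^ 2)) * E ^ n + E * ((c * n) • (Xu * Xv * E ^ (n + 1))) := by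
          rw [hUE, ih]
      _ = c • (Xu * Xv * E ^ (n + 2)) + (c * n) • (Xu * Xv * E ^ (n + 2)) := by
          have hc : Commute E (Xu * Xv) := (hXu E).symm.mul_right (hXv E).symm
          rw [smul_mul_assoc, mul_smul_comm]
          congr 1
          · rw [mul_assoc (Xu * Xv), ← pow_add, add_comm 2 n]
          · congr 1
            rw [← mul_assoc, hc.eq, mul_assoc, ← pow_succ']
      _ = (c * (n + 1 : ℕ)) • (Xu * Xv * E ^ (n + 1 + 1)) := by
          rw [← add_smul]
          push_cast
          ring_nf
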